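/- The set F := [0,1] × [0,1] × {0} ⊆ ℝ³ is Minkowski measurable of dimension 2 with 2-dimensional Minkowski content equal to 2, i.e. lim_{ε→0+} ε^{−1} λ_3(F_ε) = 2. In particular, the attractor of the lattice self-similar system {x/2, x/2 + (1/2,0,0), x/2 + (0,1/2,0), x/2 + (1/2,1/2,0)} on ℝ³, which has integer Minkowski dimension 2 < 3, is Minkowski measurable. -/

import Mathlib

open MeasureTheory Filter Set Topology

/-- The `ε`-parallel set `A_ε = {x : dist(x,A) ≤ ε}`. -/
def pSet {d : ℕ} (A : Set (EuclideanSpace ℝ (Fin d))) (ε : ℝ) :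
    Set (EuclideanSpace ℝ (Fin d)) :=
  {x | Metric.infDist x A ≤ ε}

/-- The vector `(a, b, c) ∈ ℝ³`. -/
noncomputable def vec3 (a b c : ℝ) : EuclideanSpace ℝ (Fin 3) :=
  (EuclideanSpace.equiv (Fin 3) ℝ).symm ![a, b, c]

/-- The four similarity maps `S_1(x) = x/2`, `S_2(x) = x/2 + (1/2,0,0)`,
`S_3(x) = x/2 + (0,1/2,0)`, `S_4(x) = x/2 + (1/2,1/2,0)` on `ℝ³` (a lattice self-similar
system with common ratio `1/2`). -/
noncomputable def sqMap : Fin 4 → EuclideanSpace ℝ (Fin 3) → EuclideanSpace ℝ (Fin 3) :=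
  ![fun x => (1 / 2 : ℝ) • x,
    fun x => (1 / 2 : ℝ) • x + vec3 (1 / 2) 0 0,
    fun x => (1 / 2 : ℝ) • x + vec3 0 (1 / 2) 0,
    fun x => (1 / 2 : ℝ) • x + vec3 (1 / 2) (1 / 2) 0]

/-- The unit square `[0,1] × [0,1] × {0} ⊆ ℝ³`. -/
def sqF : Set (EuclideanSpace ℝ (Fin 3)) :=
  {x | x 0 ∈ Set.Icc (0 : ℝ) 1 ∧ x 1 ∈ Set.Icc (0 : ℝ) 1 ∧ x 2 = 0}

@[simp] lemma vec3_0 (a b c : ℝ) : vec3 a b c 0 = a := rfl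
@[simp] lemma vec3_1 (a b c : ℝ) : vec3 a b c 1 = b := rfl
@[simp] lemma vec3_2 (a b c : ℝ) : vec3 a b c 2 = c := rfl

lemma sqF_nonempty : sqF.Nonempty :=
  ⟨vec3 0 0 0, by simp [sqF]⟩

lemma coord_le (x y : EuclideanSpace ℝ (Fin 3)) (i : Fin 3) : |x i - y i| ≤ dist x y := by
  rw [EuclideanSpace.dist_eq]
  have h : |x i - y i| ^ 2 ≤ ∑ j, dist (x j) (y j) ^ 2 := by
    have := Finset.single_le_sum (f := fun j => dist (x j) (y j) ^ 2)
      (fun j _ => sq_nonneg _) (Finset.mem_univ i)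
    simpa [Real.dist_eq, sq_abs] using this
  calc |x i - y i| = Real.sqrt (|x i - y i| ^ 2) := (Real.sqrt_sq (abs_nonneg _)).symm
    _ ≤ _ := Real.sqrt_le_sqrt h

lemma vol_box (s₀ s₁ s₂ : Set ℝ) (h₀ : MeasurableSet s₀) (h₁ : MeasurableSet s₁)
    (h₂ : MeasurableSet s₂) :
    volume {x : EuclideanSpace ℝ (Fin 3) | x 0 ∈ s₀ ∧ x 1 ∈ s₁ ∧ x 2 ∈ s₂}
      = volume s₀ * volume s₁ * volume s₂ := by
  have hm : ∀ i, MeasurableSet (![s₀, s₁, s₂] i) := by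
    intro i; fin_cases i <;> assumption
  have h1 : {x : EuclideanSpace ℝ (Fin 3) | x 0 ∈ s₀ ∧ x 1 ∈ s₁ ∧ x 2 ∈ s₂}
      = (MeasurableEquiv.toLp 2 (Fin 3 → ℝ)).symm ⁻¹' (Set.univ.pi ![s₀, s₁, s₂]) := by
    ext x
    simp only [Set.mem_setOf_eq, Set.mem_preimage, Set.mem_pi, Set.mem_univ, forall_true_left]
    constructor
    · rintro ⟨k0, k1, k2⟩ i
      fin_cases i <;> simpa
    · intro h; exact ⟨by simpa using h 0, by simpa using h 1, by simpa using h 2⟩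
  rw [h1, (EuclideanSpace.volume_preserving_symm_measurableEquiv_toLp (Fin 3)).measure_preimage
    ((MeasurableSet.univ_pi hm).nullMeasurableSet), volume_pi_pi, Fin.prod_univ_three]
  simp

lemma lower_sub {ε : ℝ} :
    {x : EuclideanSpace ℝ (Fin 3) | x 0 ∈ Icc (0:ℝ) 1 ∧ x 1 ∈ Icc (0:ℝ) 1 ∧ x 2 ∈ Icc (-ε) ε}
      ⊆ pSet sqF ε := by
  rintro x ⟨h0, h1, h2⟩
  have hy : vec3 (x 0) (x 1) 0 ∈ sqF := ⟨h0, h1, rfl⟩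
  have hd : dist x (vec3 (x 0) (x 1) 0) = |x 2| := by
    rw [EuclideanSpace.dist_eq, Fin.sum_univ_three]
    simp [Real.dist_eq, sq_abs, Real.sqrt_sq_eq_abs]
  refine le_trans (Metric.infDist_le_dist_of_mem hy) ?_
  rw [hd]
  exact abs_le.mpr ⟨h2.1, h2.2⟩

lemma upper_sub {ε : ℝ} :
    pSet sqF ε ⊆
      {x : EuclideanSpace ℝ (Fin 3) | x 0 ∈ Icc (-ε) (1+ε) ∧ x 1 ∈ Icc (-ε) (1+ε) ∧ x 2 ∈ Icc (-ε) ε} := by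
  intro x hx
  have key : ∀ b : ℝ, (∀ y ∈ sqF, b ≤ dist x y) → b ≤ ε := by
    intro b hb
    refine le_trans ?_ hx
    by_contra h
    push_neg at h
    obtain ⟨y, hy, hlt⟩ := (Metric.infDist_lt_iff sqF_nonempty).mp h
    exact absurd (hb y hy) (not_le.mpr hlt)
  have k1 : x 0 - 1 ≤ ε := key _ fun y ⟨⟨_, hy1⟩, _, _⟩ =>
    le_trans (by have := le_abs_self (x 0 - y 0); linarith) (coord_le x y 0)
  have k2 : -(x 0) ≤ ε := key _ fun y ⟨⟨hy0, _⟩, _, _⟩ =>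
    le_trans (by have := neg_abs_le (x 0 - y 0); linarith) (coord_le x y 0)
  have k3 : x 1 - 1 ≤ ε := key _ fun y ⟨_, ⟨_, hy1⟩, _⟩ =>
    le_trans (by have := le_abs_self (x 1 - y 1); linarith) (coord_le x y 1)
  have k4 : -(x 1) ≤ ε := key _ fun y ⟨_, ⟨hy0, _⟩, _⟩ =>
    le_trans (by have := neg_abs_le (x 1 - y 1); linarith) (coord_le x y 1)
  have k5 : |x 2| ≤ ε := key _ fun y ⟨_, _, hy2⟩ => by
    have := coord_le x y 2; rw [hy2, sub_zero] at this; exact this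
  have k5' := abs_le.mp k5
  exact ⟨⟨by linarith, by linarith⟩, ⟨by linarith, by linarith⟩, ⟨k5'.1, k5'.2⟩⟩


/-- The set `F = [0,1] × [0,1] × {0} ⊆ ℝ³` is Minkowski measurable of
dimension `2` with 2-dimensional Minkowski content `lim_{ε→0+} ε^{2−3} λ_3(F_ε) = 2`.
In particular, the attractor of the lattice self-similar system
`{x/2, x/2+(1/2,0,0), x/2+(0,1/2,0), x/2+(1/2,1/2,0)}` on `ℝ³` (which has integer
Minkowski dimension `2 < 3`) is Minkowski measurable. -/
theorem stmt18 :
    Tendsto (fun ε : ℝ => ε ^ ((2 : ℝ) - 3) * (volume (pSet sqF ε)).toReal)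
      (𝓝[>] (0 : ℝ)) (𝓝 2) ∧
    sqF = (⋃ i, sqMap i '' sqF) := by
  constructor
  · have hU : ∀ ε : ℝ, 0 < ε → volume (pSet sqF ε) ≤ ENNReal.ofReal ((1+2*ε)*(1+2*ε)*(2*ε)) := by
      intro ε hε
      refine le_trans (measure_mono upper_sub) ?_
      rw [vol_box _ _ _ measurableSet_Icc measurableSet_Icc measurableSet_Icc]
      simp only [Real.volume_Icc]
      have e1 : (0:ℝ) ≤ 1 + ε - -ε := by linarith
      rw [← ENNReal.ofReal_mul e1, ← ENNReal.ofReal_mul (mul_nonneg e1 e1)]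
      exact ENNReal.ofReal_le_ofReal (le_of_eq (by ring))
    have hL : ∀ ε : ℝ, 0 < ε → ENNReal.ofReal (2*ε) ≤ volume (pSet sqF ε) := by
      intro ε hε
      refine le_trans (le_of_eq ?_) (measure_mono lower_sub)
      rw [vol_box _ _ _ measurableSet_Icc measurableSet_Icc measurableSet_Icc]
      simp only [Real.volume_Icc, sub_zero, ENNReal.ofReal_one, one_mul]
      congr 1
      ring
    have hfin : ∀ ε : ℝ, 0 < ε → volume (pSet sqF ε) ≠ ⊤ := fun ε hε =>
      ne_top_of_le_ne_top ENNReal.ofReal_ne_top (hU ε hε)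
    have hpow : ∀ ε : ℝ, 0 < ε → ε ^ ((2:ℝ) - 3) = ε⁻¹ := by
      intro ε hε
      rw [show ((2:ℝ) - 3) = -1 by norm_num, Real.rpow_neg_one]
    refine tendsto_of_tendsto_of_tendsto_of_le_of_le'
      (g := fun _ : ℝ => (2:ℝ)) (h := fun ε : ℝ => 2*(1+2*ε)^2)
      tendsto_const_nhds ?_ ?_ ?_
    · have : Tendsto (fun ε : ℝ => 2*(1+2*ε)^2) (𝓝 0) (𝓝 (2*(1+2*(0:ℝ))^2)) :=
        (by continuity : Continuous fun ε : ℝ => 2*(1+2*ε)^2).tendsto 0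
      simpa using this.mono_left nhdsWithin_le_nhds
    · filter_upwards [self_mem_nhdsWithin] with ε (hε : 0 < ε)
      have h1 : (2:ℝ)*ε ≤ (volume (pSet sqF ε)).toReal := by
        have := ENNReal.toReal_mono (hfin ε hε) (hL ε hε)
        rwa [ENNReal.toReal_ofReal (by linarith)] at this
      rw [hpow ε hε]
      rw [show (2:ℝ) = ε⁻¹ * (2*ε) by field_simp]
      exact mul_le_mul_of_nonneg_left h1 (by positivity)
    · filter_upwards [self_mem_nhdsWithin] with ε (hε : 0 < ε)
      have h1 : (volume (pSet sqF ε)).toReal ≤ (1+2*ε)*(1+2*ε)*(2*ε) := by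
        have := ENNReal.toReal_mono ENNReal.ofReal_ne_top (hU ε hε)
        rwa [ENNReal.toReal_ofReal (by positivity)] at this
      rw [hpow ε hε]
      calc ε⁻¹ * (volume (pSet sqF ε)).toReal ≤ ε⁻¹ * ((1+2*ε)*(1+2*ε)*(2*ε)) :=
            mul_le_mul_of_nonneg_left h1 (by positivity)
        _ = 2*(1+2*ε)^2 := by field_simp
  · ext x
    simp only [Set.mem_iUnion, Set.mem_image]
    constructor
    · rintro ⟨⟨h00, h01⟩, ⟨h10, h11⟩, h2⟩
      rcases le_or_gt (x 0) (1/2) with ha | ha <;> rcases le_or_gt (x 1) (1/2) with hb | hb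
      · refine ⟨0, vec3 (2 * x 0) (2 * x 1) 0, (by simp only [sqF, Set.mem_setOf_eq, vec3_0, vec3_1, vec3_2, Set.mem_Icc]; refine ⟨⟨?_, ?_⟩, ⟨?_, ?_⟩, trivial⟩ <;> linarith), ?_⟩
        ext j; fin_cases j <;>
          simp [sqMap, vec3, PiLp.smul_apply, smul_eq_mul] <;> ring_nf <;> try exact h2.symm
      · refine ⟨2, vec3 (2 * x 0) (2 * x 1 - 1) 0, (by simp only [sqF, Set.mem_setOf_eq, vec3_0, vec3_1, vec3_2, Set.mem_Icc]; refine ⟨⟨?_, ?_⟩, ⟨?_, ?_⟩, trivial⟩ <;> linarith), ?_⟩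
        ext j; fin_cases j <;>
          simp [sqMap, vec3, PiLp.smul_apply, PiLp.add_apply, smul_eq_mul] <;> ring_nf <;> try simp [h2]
      · refine ⟨1, vec3 (2 * x 0 - 1) (2 * x 1) 0, (by simp only [sqF, Set.mem_setOf_eq, vec3_0, vec3_1, vec3_2, Set.mem_Icc]; refine ⟨⟨?_, ?_⟩, ⟨?_, ?_⟩, trivial⟩ <;> linarith), ?_⟩
        ext j; fin_cases j <;>
          simp [sqMap, vec3, PiLp.smul_apply, PiLp.add_apply, smul_eq_mul] <;> ring_nf <;> try simp [h2]
      · refine ⟨3, vec3 (2 * x 0 - 1) (2 * x 1 - 1) 0, (by simp only [sqF, Set.mem_setOf_eq, vec3_0, vec3_1, vec3_2, Set.mem_Icc]; refine ⟨⟨?_, ?_⟩, ⟨?_, ?_⟩, trivial⟩ <;> linarith), ?_⟩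
        ext j; fin_cases j <;>
          simp [sqMap, vec3, PiLp.smul_apply, PiLp.add_apply, smul_eq_mul] <;> ring_nf <;> try simp [h2]
    · rintro ⟨i, y, ⟨⟨h00, h01⟩, ⟨h10, h11⟩, h2⟩, rfl⟩
      fin_cases i <;>
        refine ⟨⟨?_, ?_⟩, ⟨?_, ?_⟩, ?_⟩ <;>
        simp [sqMap, vec3, PiLp.smul_apply, PiLp.add_apply, smul_eq_mul, h2] <;> linarith
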